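/- Let a < b be reals and let x : ℝ → ℝ be continuous on [a, b] with x t ≥ e for every t ∈ [a, b] and li(x t) = t for every t ∈ [a, b]. Then the function log ∘ x is concave on [a, b]. -/

import Mathlib

/-- The logarithmic integral `li t = ∫_2^t dτ / log τ`. -/
noncomputable def li (t : ℝ) : ℝ := ∫ τ in (2:ℝ)..t, 1 / Real.log τ

lemma contOn_inv_log : ContinuousOn (fun τ : ℝ => 1 / Real.log τ) (Set.Ioi 1) := by
  apply ContinuousOn.div continuousOn_const
  · exact Real.continuousOn_log.mono fun τ hτ => ne_of_gt (lt_trans one_pos hτ)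
  · intro τ hτ
    exact ne_of_gt (Real.log_pos hτ)

lemma hasDerivAt_li {t : ℝ} (ht : 1 < t) : HasDerivAt li (1 / Real.log t) t := by
  have hsub : Set.uIcc (2:ℝ) t ⊆ Set.Ioi 1 := by
    intro τ hτ
    have := hτ.1
    have h1 : (1:ℝ) < min 2 t := lt_min one_lt_two ht
    exact lt_of_lt_of_le h1 hτ.1
  have hint : IntervalIntegrable (fun τ : ℝ => 1 / Real.log τ) MeasureTheory.volume 2 t :=
    (contOn_inv_log.mono hsub).intervalIntegrable
  have hmeas := contOn_inv_log.stronglyMeasurableAtFilter isOpen_Ioi (μ := MeasureTheory.volume)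
  exact intervalIntegral.integral_hasDerivAt_right hint (hmeas t ht)
    (contOn_inv_log.continuousAt (Ioi_mem_nhds ht))

lemma li_strictMonoOn : StrictMonoOn li (Set.Ici (Real.exp 1)) := by
  have h1e : (1:ℝ) < Real.exp 1 := by
    have := Real.add_one_lt_exp (x := 1) one_ne_zero
    linarith
  have hd : ∀ s ∈ Set.Ici (Real.exp 1), 1 < s := fun s hs => lt_of_lt_of_le h1e hs
  apply strictMonoOn_of_deriv_pos (convex_Ici _)
  · intro s hs
    exact (hasDerivAt_li (hd s hs)).continuousAt.continuousWithinAt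
  · intro s hs
    rw [interior_Ici] at hs
    have h1s : 1 < s := lt_trans h1e hs
    rw [(hasDerivAt_li h1s).deriv]
    exact div_pos one_pos (Real.log_pos h1s)

/-- `t ↦ log (li⁻¹ t)` is concave wherever `li⁻¹ t ≥ e`. -/
theorem concaveOn_log_inverse_li
    (a b : ℝ) (hab : a < b)
    (x : ℝ → ℝ) (hx : ContinuousOn x (Set.Icc a b))
    (hxe : ∀ t ∈ Set.Icc a b, Real.exp 1 ≤ x t)
    (hli : ∀ t ∈ Set.Icc a b, li (x t) = t) :
    ConcaveOn ℝ (Set.Icc a b) (fun t => Real.log (x t)) := by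
  have h1e : (1:ℝ) < Real.exp 1 := by
    have := Real.add_one_lt_exp (x := 1) one_ne_zero
    linarith
  have hx1 : ∀ t ∈ Set.Icc a b, 1 < x t := fun t ht => lt_of_lt_of_le h1e (hxe t ht)
  have hxpos : ∀ t ∈ Set.Icc a b, 0 < x t := fun t ht => lt_trans one_pos (hx1 t ht)
  -- x is monotone on Icc a b
  have hmono : MonotoneOn x (Set.Icc a b) := by
    intro s hs t ht hst
    by_contra h
    push_neg at h
    have := li_strictMonoOn (hxe t ht) (hxe s hs) h
    rw [hli s hs, hli t ht] at this
    exact absurd hst (not_le.mpr this)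
  -- derivative of x at interior points
  have hIoo : Set.Ioo a b ⊆ Set.Icc a b := Set.Ioo_subset_Icc_self
  have hderivx : ∀ t ∈ Set.Ioo a b, HasDerivAt x (Real.log (x t)) t := by
    intro t ht
    have hnhds : Set.Icc a b ∈ nhds t := Icc_mem_nhds ht.1 ht.2
    have hc : ContinuousAt x t := hx.continuousAt hnhds
    have hfd : HasDerivAt li (1 / Real.log (x t)) (x t) := hasDerivAt_li (hx1 t (hIoo ht))
    have hne : 1 / Real.log (x t) ≠ 0 :=
      ne_of_gt (div_pos one_pos (Real.log_pos (hx1 t (hIoo ht))))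
    have hfg : ∀ᶠ y in nhds t, li (x y) = y :=
      Filter.eventually_of_mem hnhds fun y hy => hli y hy
    have := HasDerivAt.of_local_left_inverse hc hfd hne hfg
    simpa using this
  have hderivf : ∀ t ∈ Set.Ioo a b,
      HasDerivAt (fun t => Real.log (x t)) (Real.log (x t) / x t) t := by
    intro t ht
    have := (Real.hasDerivAt_log (ne_of_gt (hxpos t (hIoo ht)))).comp t (hderivx t ht)
    simpa [div_eq_mul_inv, mul_comm, Function.comp_def] using this
  apply AntitoneOn.concaveOn_of_deriv (convex_Icc a b)
  · exact Real.continuousOn_log.comp hx fun t ht =>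
      Set.mem_compl_singleton_iff.mpr (ne_of_gt (hxpos t ht))
  · rw [interior_Icc]
    exact fun t ht => (hderivf t ht).differentiableAt.differentiableWithinAt
  · rw [interior_Icc]
    intro s hs t ht hst
    rw [(hderivf s hs).deriv, (hderivf t ht).deriv]
    exact Real.log_div_self_antitoneOn (hxe s (hIoo hs)) (hxe t (hIoo ht))
      (hmono (hIoo hs) (hIoo ht) hst)
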